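/- Let f(n) = 2^{s₂(n)} be the number of odd entries in the n-th row of Pascal's triangle. Then lim_{n→∞} Var(ln(f(N)))/ln(n) = ln(2)/4; equivalently, lim_{n→∞} Var(s₂(N))/log₂(n) = 1/4. -/

import Mathlib

open Finset Filter Real

namespace BinDisp

def s (k : ℕ) : ℕ := (Nat.digits 2 k).sum

lemma s_two_mul (k : ℕ) : s (2 * k) = s k := by
  rcases Nat.eq_zero_or_pos k with h | h
  · simp [s, h]
  · have hd : Nat.digits 2 (2 * k) = (2 * k) % 2 :: Nat.digits 2 ((2 * k) / 2) :=
      Nat.digits_def' (by norm_num) (by positivity)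
    simp [s, hd, Nat.mul_div_cancel_left, Nat.mul_mod_right]

lemma s_two_mul_add_one (k : ℕ) : s (2 * k + 1) = s k + 1 := by
  have hd : Nat.digits 2 (2 * k + 1) = (2 * k + 1) % 2 :: Nat.digits 2 ((2 * k + 1) / 2) :=
    Nat.digits_def' (by norm_num) (by positivity)
  have h1 : (2 * k + 1) % 2 = 1 := by omega
  have h2 : (2 * k + 1) / 2 = k := by omega
  simp [s, hd, h1, h2]; omega

lemma s_le {k : ℕ} (hk : k ≠ 0) : s k ≤ Nat.log 2 k + 1 := by
  have h1 : (Nat.digits 2 k).sum ≤ (Nat.digits 2 k).length • 1 :=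
    List.sum_le_card_nsmul _ _ (fun x hx =>
      Nat.lt_succ_iff.mp (Nat.digits_lt_base (by norm_num) hx))
  simpa [s, Nat.digits_len 2 k (by norm_num) hk] using h1

lemma sum_range_two_mul {M : Type*} [AddCommMonoid M] (F : ℕ → M) (n : ℕ) :
    ∑ k ∈ range (2 * n), F k = ∑ j ∈ range n, (F (2 * j) + F (2 * j + 1)) := by
  induction n with
  | zero => simp
  | succ n ih =>
    have h : 2 * (n + 1) = (2 * n + 1) + 1 := by ring
    rw [h, Finset.sum_range_succ, Finset.sum_range_succ, ih, Finset.sum_range_succ, add_assoc]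

noncomputable def Sa (n : ℕ) : ℝ := ∑ k ∈ range n, (s k : ℝ)
noncomputable def Sb (n : ℕ) : ℝ := ∑ k ∈ range n, (s k : ℝ) ^ 2
noncomputable def W (n : ℕ) : ℝ := n * Sb n - Sa n ^ 2

lemma Sa_even (n : ℕ) : Sa (2 * n) = 2 * Sa n + n := by
  rw [Sa, sum_range_two_mul]
  have h : ∀ j ∈ range n, ((s (2 * j) : ℝ) + (s (2 * j + 1) : ℝ)) = 2 * (s j : ℝ) + 1 := by
    intro j _; rw [s_two_mul, s_two_mul_add_one]; push_cast; ring
  rw [Finset.sum_congr rfl h, Finset.sum_add_distrib, ← Finset.mul_sum, Finset.sum_const,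
    Finset.card_range]
  simp [Sa]

lemma Sb_even (n : ℕ) : Sb (2 * n) = 2 * Sb n + 2 * Sa n + n := by
  rw [Sb, sum_range_two_mul]
  have h : ∀ j ∈ range n, ((s (2 * j) : ℝ) ^ 2 + (s (2 * j + 1) : ℝ) ^ 2)
      = 2 * (s j : ℝ) ^ 2 + (2 * (s j : ℝ) + 1) := by
    intro j _; rw [s_two_mul, s_two_mul_add_one]; push_cast; ring
  rw [Finset.sum_congr rfl h, Finset.sum_add_distrib, ← Finset.mul_sum, Finset.sum_add_distrib,
    ← Finset.mul_sum, Finset.sum_const, Finset.card_range]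
  simp [Sa, Sb]; ring

lemma Sa_odd (n : ℕ) : Sa (2 * n + 1) = 2 * Sa n + n + (s n : ℝ) := by
  rw [Sa, Finset.sum_range_succ, ← Sa, Sa_even, s_two_mul]

lemma Sb_odd (n : ℕ) : Sb (2 * n + 1) = 2 * Sb n + 2 * Sa n + n + (s n : ℝ) ^ 2 := by
  rw [Sb, Finset.sum_range_succ, ← Sb, Sb_even, s_two_mul]

lemma W_even (n : ℕ) : W (2 * n) = 4 * W n + (n : ℝ) ^ 2 := by
  rw [W, W, Sa_even, Sb_even]; push_cast; ring

lemma W_odd (n : ℕ) : W (2 * n + 1) = 4 * W n + (n : ℝ) ^ 2 +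
    (2 * Sb n + 2 * Sa n + n + 2 * n * (s n : ℝ) ^ 2 - 2 * n * (s n : ℝ)
      - 4 * Sa n * (s n : ℝ)) := by
  rw [W, W, Sa_odd, Sb_odd]; push_cast; ring

lemma s_cast_le {n k : ℕ} (hn : n ≠ 0) (hk : k ≤ n) :
    (s k : ℝ) ≤ (Nat.log 2 n : ℝ) + 1 := by
  rcases Nat.eq_zero_or_pos k with h | h
  · subst h
    have h0 : s 0 = 0 := by simp [s]
    rw [h0]
    have := Nat.cast_nonneg (α := ℝ) (Nat.log 2 n)
    simp
    linarith
  · have := le_trans (s_le h.ne') (Nat.succ_le_succ (Nat.log_mono_right hk))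
    exact_mod_cast this

lemma Sa_nonneg (n : ℕ) : 0 ≤ Sa n := by rw [Sa]; positivity
lemma Sb_nonneg (n : ℕ) : 0 ≤ Sb n := by rw [Sb]; positivity

lemma Sa_le {n : ℕ} (hn : n ≠ 0) : Sa n ≤ n * ((Nat.log 2 n : ℝ) + 1) := by
  calc Sa n ≤ (range n).card • ((Nat.log 2 n : ℝ) + 1) :=
        Finset.sum_le_card_nsmul _ _ _ (fun k hk =>
          s_cast_le hn (le_of_lt (Finset.mem_range.mp hk)))
  _ = n * ((Nat.log 2 n : ℝ) + 1) := by simp [Finset.card_range]; ring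

lemma Sb_le {n : ℕ} (hn : n ≠ 0) : Sb n ≤ n * ((Nat.log 2 n : ℝ) + 1) ^ 2 := by
  calc Sb n ≤ (range n).card • ((Nat.log 2 n : ℝ) + 1) ^ 2 := by
        refine Finset.sum_le_card_nsmul _ _ _ (fun k hk => ?_)
        have h1 := s_cast_le hn (le_of_lt (Finset.mem_range.mp hk))
        have h0 : (0 : ℝ) ≤ (s k : ℝ) := by positivity
        nlinarith
  _ = n * ((Nat.log 2 n : ℝ) + 1) ^ 2 := by simp [Finset.card_range]

lemma W_abs_le {n : ℕ} (hn : n ≠ 0) : |W n| ≤ 2 * (n : ℝ) ^ 2 * ((Nat.log 2 n : ℝ) + 1) ^ 2 := by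
  have h1 := Sa_le hn
  have h2 := Sb_le hn
  have h3 := Sa_nonneg n
  have h4 := Sb_nonneg n
  have hn' : (1 : ℝ) ≤ (n : ℝ) := by exact_mod_cast Nat.one_le_iff_ne_zero.mpr hn
  have hM : (1 : ℝ) ≤ (Nat.log 2 n : ℝ) + 1 := by
    have := Nat.cast_nonneg (α := ℝ) (Nat.log 2 n); linarith
  rw [abs_le, W]
  constructor <;> nlinarith [mul_self_le_mul_self h3 h1, sq_nonneg ((Nat.log 2 n : ℝ) + 1)]

noncomputable def g (m : ℕ) : ℝ := ∑ j ∈ range m, 8 * ((j : ℝ) + 1) ^ 2 / 2 ^ j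

lemma g_sum (m : ℕ) : g m = 8 * (12 - 2 * ((m : ℝ) ^ 2 + 4 * m + 6) / 2 ^ m) := by
  rw [g]
  induction m with
  | zero => norm_num
  | succ m ih =>
    rw [Finset.sum_range_succ, ih]
    have h2 : ((2 : ℝ) ^ m) ≠ 0 := by positivity
    push_cast; field_simp; ring

lemma g_le (m : ℕ) : g m ≤ 96 := by
  rw [g_sum]
  have : 0 ≤ 2 * ((m : ℝ) ^ 2 + 4 * m + 6) / 2 ^ m := by positivity
  linarith

lemma g_mono {m : ℕ} : g m ≤ g (m + 1) := by
  rw [g, g, Finset.sum_range_succ]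
  have : 0 ≤ 8 * ((m : ℝ) + 1) ^ 2 / 2 ^ m := by positivity
  linarith

lemma step_core {Q M Wq Wn E : ℝ} (hQ : 1 ≤ Q) (hM : 1 ≤ M)
    (hWq : |Wq| ≤ 2 * Q ^ 2 * M ^ 2) (hE : |E| ≤ 13 * Q * M ^ 2)
    (hWn : Wn = 4 * Wq + Q ^ 2 + E) :
    |Wn / (2 * Q + 1) ^ 2 - (Wq / Q ^ 2 + 1 / 4)| ≤ 8 * M ^ 2 / Q := by
  have hQ0 : (0 : ℝ) < Q := by linarith
  have hQne : Q ≠ 0 := ne_of_gt hQ0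
  have hD0 : (2 * Q + 1) ≠ 0 := by linarith
  have hid : Wn / (2 * Q + 1) ^ 2 - (Wq / Q ^ 2 + 1 / 4)
      = (-((4 * Q + 1) * Wq)) / (Q ^ 2 * (2 * Q + 1) ^ 2)
        + (-(4 * Q + 1)) / (4 * (2 * Q + 1) ^ 2) + E / (2 * Q + 1) ^ 2 := by
    rw [hWn]; field_simp; ring
  rw [hid]
  have hden1 : (0 : ℝ) < Q ^ 2 * (2 * Q + 1) ^ 2 := by positivity
  have hden2 : (0 : ℝ) < 4 * (2 * Q + 1) ^ 2 := by positivity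
  have hden3 : (0 : ℝ) < (2 * Q + 1) ^ 2 := by positivity
  have t1 : |(-((4 * Q + 1) * Wq)) / (Q ^ 2 * (2 * Q + 1) ^ 2)| ≤ 3 * M ^ 2 / Q := by
    rw [abs_div, abs_neg, abs_of_pos hden1, abs_mul, abs_of_pos (by linarith : (0:ℝ) < 4 * Q + 1),
      div_le_div_iff₀ hden1 hQ0]
    have h1 : (4 * Q + 1) * |Wq| ≤ (4 * Q + 1) * (2 * Q ^ 2 * M ^ 2) :=
      mul_le_mul_of_nonneg_left hWq (by linarith)
    have key : (0:ℝ) ≤ M ^ 2 * Q ^ 2 * (4 * Q ^ 2 + 10 * Q + 3) := by positivity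
    nlinarith [mul_le_mul_of_nonneg_right h1 hQ0.le, key]
  have t2 : |(-(4 * Q + 1)) / (4 * (2 * Q + 1) ^ 2)| ≤ 1 * M ^ 2 / Q := by
    rw [abs_div, abs_neg, abs_of_pos hden2, abs_of_pos (by linarith : (0:ℝ) < 4 * Q + 1),
      div_le_div_iff₀ hden2 hQ0]
    have hMM : (1:ℝ) ≤ M ^ 2 := by nlinarith
    nlinarith [mul_le_mul_of_nonneg_right hMM (by positivity : (0:ℝ) ≤ 4 * (2 * Q + 1) ^ 2)]
  have t3 : |E / (2 * Q + 1) ^ 2| ≤ 4 * M ^ 2 / Q := by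
    rw [abs_div, abs_of_pos hden3, div_le_div_iff₀ hden3 hQ0]
    have h1 : |E| * Q ≤ 13 * Q * M ^ 2 * Q := mul_le_mul_of_nonneg_right hE hQ0.le
    have key : (0:ℝ) ≤ M ^ 2 * (3 * Q ^ 2 + 16 * Q + 4) := by positivity
    nlinarith [h1, key]
  calc |(-((4 * Q + 1) * Wq)) / (Q ^ 2 * (2 * Q + 1) ^ 2)
        + (-(4 * Q + 1)) / (4 * (2 * Q + 1) ^ 2) + E / (2 * Q + 1) ^ 2|
      ≤ |(-((4 * Q + 1) * Wq)) / (Q ^ 2 * (2 * Q + 1) ^ 2)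
        + (-(4 * Q + 1)) / (4 * (2 * Q + 1) ^ 2)| + |E / (2 * Q + 1) ^ 2| := abs_add_le _ _
    _ ≤ (|(-((4 * Q + 1) * Wq)) / (Q ^ 2 * (2 * Q + 1) ^ 2)|
        + |(-(4 * Q + 1)) / (4 * (2 * Q + 1) ^ 2)|) + |E / (2 * Q + 1) ^ 2| := by
        gcongr; exact abs_add_le _ _
    _ ≤ 3 * M ^ 2 / Q + 1 * M ^ 2 / Q + 4 * M ^ 2 / Q := by linarith
    _ = 8 * M ^ 2 / Q := by ring
lemma step_odd {q : ℕ} (hq : q ≠ 0) :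
    |W (2 * q + 1) / ((2 * q + 1 : ℕ) : ℝ) ^ 2 - (W q / (q : ℝ) ^ 2 + 1 / 4)|
      ≤ 8 * ((Nat.log 2 q : ℝ) + 1) ^ 2 / q := by
  have hq1 : 1 ≤ q := Nat.one_le_iff_ne_zero.mpr hq
  have hQ : (1 : ℝ) ≤ (q : ℝ) := by exact_mod_cast hq1
  have hM : (1 : ℝ) ≤ (Nat.log 2 q : ℝ) + 1 := by
    have := Nat.cast_nonneg (α := ℝ) (Nat.log 2 q); linarith
  have hs0 : (0 : ℝ) ≤ (s q : ℝ) := by positivity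
  have hsM : (s q : ℝ) ≤ (Nat.log 2 q : ℝ) + 1 := s_cast_le hq le_rfl
  have hSa := Sa_nonneg q
  have hSb := Sb_nonneg q
  have hSaM := Sa_le hq
  have hSbM := Sb_le hq
  have hE : |2 * Sb q + 2 * Sa q + (q : ℝ) + 2 * q * (s q : ℝ) ^ 2 - 2 * q * (s q : ℝ)
      - 4 * Sa q * (s q : ℝ)| ≤ 13 * (q : ℝ) * ((Nat.log 2 q : ℝ) + 1) ^ 2 := by
    rw [abs_le]
    constructor <;>
      nlinarith [mul_self_le_mul_self hs0 hsM,
        mul_le_mul hSaM hsM hs0 (by positivity : (0:ℝ) ≤ (q:ℝ) * ((Nat.log 2 q : ℝ) + 1)),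
        mul_le_mul_of_nonneg_left hM (by positivity : (0:ℝ) ≤ (q:ℝ))]
  have hcast : ((2 * q + 1 : ℕ) : ℝ) = 2 * (q : ℝ) + 1 := by push_cast; ring
  rw [hcast]
  exact step_core hQ hM (W_abs_le hq) hE (W_odd q)

lemma W_one : W 1 = 0 := by
  simp [W, Sa, Sb, s]

lemma main_bound : ∀ n : ℕ, n ≠ 0 →
    |W n / (n : ℝ) ^ 2 - (Nat.log 2 n : ℝ) / 4| ≤ g (Nat.log 2 n) := by
  intro n
  induction n using Nat.strong_induction_on with
  | _ n ih =>
    intro hn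
    rcases Nat.lt_or_ge n 2 with h2 | h2
    · interval_cases n
      · simp at hn
      · simp [W_one, Nat.log_one_right, g]
    · rcases Nat.even_or_odd n with ⟨r, hr⟩ | ⟨r, hr⟩
      · -- even case
        have hn2 : n = 2 * r := by omega
        subst hn2
        have hr0 : r ≠ 0 := by omega
        have ihq := ih r (by omega) hr0
        have hdiv : (2 * r) / 2 = r := by omega
        have hlog : Nat.log 2 (2 * r) = Nat.log 2 r + 1 := by
          rw [Nat.log_of_one_lt_of_le (by norm_num) (by omega), hdiv]
        have hR0 : ((r : ℕ) : ℝ) ≠ 0 := Nat.cast_ne_zero.mpr hr0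
        have hV : W (2 * r) / ((2 * r : ℕ) : ℝ) ^ 2
            = W r / (r : ℝ) ^ 2 + 1 / 4 := by
          rw [W_even]; push_cast; field_simp; ring
        rw [hlog, hV]
        push_cast
        calc |W r / (r : ℝ) ^ 2 + 1 / 4 - ((Nat.log 2 r : ℝ) + 1) / 4|
            = |W r / (r : ℝ) ^ 2 - (Nat.log 2 r : ℝ) / 4| := by
              congr 1; ring
          _ ≤ g (Nat.log 2 r) := ihq
          _ ≤ g (Nat.log 2 r + 1) := g_mono
      · -- odd case
        subst hr
        have hr0 : r ≠ 0 := by omega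
        have ihq := ih r (by omega) hr0
        have hdiv : (2 * r + 1) / 2 = r := by omega
        have hlog : Nat.log 2 (2 * r + 1) = Nat.log 2 r + 1 := by
          rw [Nat.log_of_one_lt_of_le (by norm_num) (by omega), hdiv]
        have hstep := step_odd hr0
        have hpow : ((2 : ℝ)) ^ (Nat.log 2 r) ≤ ((r : ℕ) : ℝ) := by
          exact_mod_cast Nat.pow_log_le_self 2 hr0
        have hfrac : 8 * ((Nat.log 2 r : ℝ) + 1) ^ 2 / (r : ℝ)
            ≤ 8 * ((Nat.log 2 r : ℝ) + 1) ^ 2 / 2 ^ (Nat.log 2 r) :=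
          div_le_div_of_nonneg_left (by positivity) (by positivity) hpow
        have hgsucc : g (Nat.log 2 r + 1)
            = g (Nat.log 2 r) + 8 * ((Nat.log 2 r : ℝ) + 1) ^ 2 / 2 ^ (Nat.log 2 r) := by
          rw [g, g, Finset.sum_range_succ]
        rw [hlog, hgsucc]
        have tri : |W (2 * r + 1) / ((2 * r + 1 : ℕ) : ℝ) ^ 2 - ((Nat.log 2 r : ℝ) + 1) / 4|
            ≤ |W (2 * r + 1) / ((2 * r + 1 : ℕ) : ℝ) ^ 2 - (W r / (r : ℝ) ^ 2 + 1 / 4)|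
              + |W r / (r : ℝ) ^ 2 - (Nat.log 2 r : ℝ) / 4| := by
          have h := abs_sub_le
            (W (2 * r + 1) / ((2 * r + 1 : ℕ) : ℝ) ^ 2)
            (W r / (r : ℝ) ^ 2 + 1 / 4)
            (((Nat.log 2 r : ℝ) + 1) / 4)
          have he : W r / (r : ℝ) ^ 2 + 1 / 4 - ((Nat.log 2 r : ℝ) + 1) / 4
              = W r / (r : ℝ) ^ 2 - (Nat.log 2 r : ℝ) / 4 := by ring
          rwa [he] at h
        have goalcast : ((Nat.log 2 r + 1 : ℕ) : ℝ) = (Nat.log 2 r : ℝ) + 1 := by push_cast; ring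
        rw [goalcast]
        calc |W (2 * r + 1) / ((2 * r + 1 : ℕ) : ℝ) ^ 2 - ((Nat.log 2 r : ℝ) + 1) / 4|
            ≤ |W (2 * r + 1) / ((2 * r + 1 : ℕ) : ℝ) ^ 2 - (W r / (r : ℝ) ^ 2 + 1 / 4)|
              + |W r / (r : ℝ) ^ 2 - (Nat.log 2 r : ℝ) / 4| := tri
          _ ≤ 8 * ((Nat.log 2 r : ℝ) + 1) ^ 2 / (r : ℝ) + g (Nat.log 2 r) := by
              linarith [hstep, ihq]
          _ ≤ g (Nat.log 2 r) + 8 * ((Nat.log 2 r : ℝ) + 1) ^ 2 / 2 ^ (Nat.log 2 r) := by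
              linarith

lemma main_bound96 : ∀ n : ℕ, n ≠ 0 → |W n / (n : ℝ) ^ 2 - (Nat.log 2 n : ℝ) / 4| ≤ 96 :=
  fun n hn => le_trans (main_bound n hn) (g_le _)

lemma logb_bounds {n : ℕ} (hn : 2 ≤ n) :
    (Nat.log 2 n : ℝ) ≤ Real.logb 2 n ∧ Real.logb 2 n < (Nat.log 2 n : ℝ) + 1
      ∧ (1 : ℝ) ≤ Real.logb 2 n := by
  have hn0 : n ≠ 0 := by omega
  have h1 : ((2:ℝ)) ^ (Nat.log 2 n) ≤ (n:ℝ) := by exact_mod_cast Nat.pow_log_le_self 2 hn0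
  have h2 : (n:ℝ) < ((2:ℝ)) ^ (Nat.log 2 n + 1) := by
    exact_mod_cast Nat.lt_pow_succ_log_self (by norm_num) n
  have hpos : (0:ℝ) < (n:ℝ) := by positivity
  have e1 : Real.logb 2 ((2:ℝ) ^ (Nat.log 2 n)) = (Nat.log 2 n : ℝ) := by
    rw [Real.logb_pow, Real.logb_self_eq_one (by norm_num)]; ring
  have e2 : Real.logb 2 ((2:ℝ) ^ (Nat.log 2 n + 1)) = (Nat.log 2 n : ℝ) + 1 := by
    rw [Real.logb_pow, Real.logb_self_eq_one (by norm_num)]; push_cast; ring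
  refine ⟨?_, ?_, ?_⟩
  · rw [← e1]; exact Real.logb_le_logb_of_le (by norm_num) (by positivity) h1
  · rw [← e2]; exact Real.logb_lt_logb (by norm_num) hpos h2
  · have : Real.logb 2 (2:ℝ) ≤ Real.logb 2 (n:ℝ) :=
      Real.logb_le_logb_of_le (by norm_num) (by norm_num) (by exact_mod_cast hn)
    rwa [Real.logb_self_eq_one (by norm_num)] at this

lemma core_tendsto :
    Tendsto (fun n : ℕ => W n / (n : ℝ) ^ 2 / Real.logb 2 n) atTop (nhds (1 / 4)) := by
  rw [tendsto_iff_dist_tendsto_zero]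
  refine squeeze_zero' (Filter.Eventually.of_forall (fun n => dist_nonneg))
    (g := fun n : ℕ => 97 / Real.logb 2 n) ?_ ?_
  · filter_upwards [Filter.eventually_atTop.mpr ⟨2, fun n hn => hn⟩] with n hn
    obtain ⟨hL1, hL2, hL3⟩ := logb_bounds hn
    have hLpos : (0:ℝ) < Real.logb 2 n := by linarith
    have hb := main_bound96 n (by omega)
    rw [Real.dist_eq]
    have hn0 : ((n:ℝ)) ≠ 0 := by positivity
    have hLne : Real.logb 2 (n:ℝ) ≠ 0 := ne_of_gt hLpos
    have key : W n / (n : ℝ) ^ 2 / Real.logb 2 n - 1 / 4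
        = (W n / (n : ℝ) ^ 2 - Real.logb 2 n / 4) / Real.logb 2 n := by
      field_simp
    rw [key, abs_div, abs_of_pos hLpos]
    have h4 : |W n / (n : ℝ) ^ 2 - Real.logb 2 n / 4| ≤ 97 := by
      have := abs_sub_le (W n / (n : ℝ) ^ 2) ((Nat.log 2 n : ℝ) / 4) (Real.logb 2 n / 4)
      have h5 : |(Nat.log 2 n : ℝ) / 4 - Real.logb 2 n / 4| ≤ 1 := by
        rw [abs_le]; constructor <;> linarith
      linarith
    gcongr
  · exact Filter.Tendsto.div_atTop tendsto_const_nhds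
      ((Real.tendsto_logb_atTop one_lt_two).comp tendsto_natCast_atTop_atTop)

end BinDisp

open BinDisp Filter Real in
theorem binomial_typical_dispersion :
    (Filter.Tendsto
      (fun n : ℕ =>
        ((1 / (n : ℝ)) * (∑ k ∈ Finset.range n, (Real.log ((2 : ℝ) ^ (Nat.digits 2 k).sum)) ^ 2)
          - ((1 / (n : ℝ)) * ∑ k ∈ Finset.range n,
              Real.log ((2 : ℝ) ^ (Nat.digits 2 k).sum)) ^ 2)
          / Real.log n)
      Filter.atTop (nhds (Real.log 2 / 4)))
    ∧
    (Filter.Tendsto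
      (fun n : ℕ =>
        ((1 / (n : ℝ)) * (∑ k ∈ Finset.range n, (((Nat.digits 2 k).sum : ℝ)) ^ 2)
          - ((1 / (n : ℝ)) * ∑ k ∈ Finset.range n, ((Nat.digits 2 k).sum : ℝ)) ^ 2)
          / Real.logb 2 n)
      Filter.atTop (nhds (1 / 4))) := by
  have hlog2 : (0:ℝ) < Real.log 2 := Real.log_pos (by norm_num)
  constructor
  · have h := core_tendsto.const_mul (Real.log 2)
    have h2 : Real.log 2 * (1/4) = Real.log 2 / 4 := by ring
    rw [h2] at h
    refine Filter.Tendsto.congr' ?_ h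
    filter_upwards [Filter.eventually_ge_atTop 2] with n hn
    obtain ⟨hL1, hL2, hL3⟩ := logb_bounds hn
    have hLpos : (0:ℝ) < Real.logb 2 n := by linarith
    have hn0 : ((n:ℝ)) ≠ 0 := by positivity
    have hsum1 : ∑ k ∈ Finset.range n, (Real.log ((2 : ℝ) ^ (Nat.digits 2 k).sum)) ^ 2
        = Real.log 2 ^ 2 * Sb n := by
      rw [Sb, Finset.mul_sum]
      refine Finset.sum_congr rfl (fun k _ => ?_)
      rw [Real.log_pow]
      simp only [s]
      ring
    have hsum2 : ∑ k ∈ Finset.range n, Real.log ((2 : ℝ) ^ (Nat.digits 2 k).sum)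
        = Real.log 2 * Sa n := by
      rw [Sa, Finset.mul_sum]
      refine Finset.sum_congr rfl (fun k _ => ?_)
      rw [Real.log_pow]
      simp only [s]
      ring
    have hlogn : Real.log (n:ℝ) = Real.logb 2 n * Real.log 2 := by
      rw [Real.logb]
      field_simp
    rw [hsum1, hsum2, hlogn, W]
    field_simp
  · refine Filter.Tendsto.congr' ?_ core_tendsto
    filter_upwards [Filter.eventually_ge_atTop 2] with n hn
    obtain ⟨hL1, hL2, hL3⟩ := logb_bounds hn
    have hn0 : ((n:ℝ)) ≠ 0 := by positivity
    have e : W n / (n:ℝ)^2 = (1/(n:ℝ)) * (∑ k ∈ Finset.range n, (((Nat.digits 2 k).sum : ℝ)) ^ 2)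
        - ((1/(n:ℝ)) * ∑ k ∈ Finset.range n, ((Nat.digits 2 k).sum : ℝ)) ^ 2 := by
      rw [W, Sa, Sb]
      simp only [s]
      field_simp
    rw [e]
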